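/- (Proposition 1: Optimal solution for g₀ and g₁.) Let (Ω, P) carry X : Ω → 𝒳 (standard Borel), a treatment indicator T : Ω → {0,1}, potential outcomes Y₀, Y₁ : Ω → ℝ, and observed outcome Y = Y₁ on {T = 1} and Y = Y₀ on {T = 0} (consistency). Assume ignorability: (Y₀, Y₁) is conditionally independent of T given X; and positivity: there is a measurable e : 𝒳 → [0,1] with P(T = 1 | X) = e(X) a.s. and 0 < e(x) < 1 for μ_X-a.e. x, where μ_X is the law of X. Let Z be a real random variable with law ν, independent of (X, T, Y₀, Y₁), and let F_t(x, z) be the conditional CDF of Y_t given X = x. Then for all jointly measurable g₀, g₁ : ℝ × 𝒳 → (0,1), the loss g-loss*(g₀, g₁) := E[1_{T=0}·ℓ(1_{Y ≤ Z}, g₀(Z, X))] + E[1_{T=1}·ℓ(1_{Y ≤ Z}, g₁(Z, X))] satisfies g-loss*(g₀, g₁) ≥ E[1_{T=0}·H(F₀(X, Z))] + E[1_{T=1}·H(F₁(X, Z))], and any pair (g₀, g₁) attaining this infimum satisfies g₀(z, x) = F₀(x, z) and g₁(z, x) = F₁(x, z) for ν ⊗ μ_X-almost every (z, x), i.e. almost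 everywhere on the full covariate distribution, not merely on the respective treatment subpopulations. -/

import Mathlib

open MeasureTheory ProbabilityTheory
open scoped ENNReal

/-- Binary cross-entropy loss `ℓ(t, p) = −(t·log p + (1 − t)·log(1 − p))`. -/
noncomputable def bce (t p : ℝ) : ℝ := -(t * Real.log p + (1 - t) * Real.log (1 - p))

/-- Binary entropy `H(a) = −(a·log a + (1 − a)·log(1 − a))` (`0·log 0 = 0` automatic). -/
noncomputable def binEntropy' (a : ℝ) : ℝ := -(a * Real.log a + (1 - a) * Real.log (1 - a))

/-- The group-`t` g-loss term `E[1_{T = t} · ℓ(1_{Y ≤ Z}, g(Z, X))]`. -/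
noncomputable def groupLoss {Ω 𝓧 : Type*} [MeasurableSpace Ω] (P : Measure Ω)
    (X : Ω → 𝓧) (T : Ω → Bool) (Y Z : Ω → ℝ) (t : Bool) (g : ℝ × 𝓧 → ℝ) : ℝ≥0∞ :=
  ∫⁻ ω, ENNReal.ofReal
    ((if T ω = t then 1 else 0) * bce (if Y ω ≤ Z ω then 1 else 0) (g (Z ω, X ω))) ∂P

/-- The group-`t` entropy term `E[1_{T = t} · H(F(X, Z))]`. -/
noncomputable def groupEntropy {Ω 𝓧 : Type*} [MeasurableSpace Ω] (P : Measure Ω)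
    (X : Ω → 𝓧) (T : Ω → Bool) (Z : Ω → ℝ) (t : Bool) (F : 𝓧 → ℝ → ℝ) : ℝ≥0∞ :=
  ∫⁻ ω, ENNReal.ofReal ((if T ω = t then 1 else 0) * binEntropy' (F (X ω) (Z ω))) ∂P

section Aux
open Set
lemma measurable_bce_const (c : ℝ) : Measurable fun p => bce c p := by
  unfold bce
  exact ((measurable_const.mul Real.measurable_log).add
    (measurable_const.mul (Real.measurable_log.comp (measurable_const.sub measurable_id)))).neg

lemma measurable_binEntropy' : Measurable binEntropy' := by
  unfold binEntropy'
  exact ((measurable_id.mul Real.measurable_log).add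
    ((measurable_const.sub measurable_id).mul
      (Real.measurable_log.comp (measurable_const.sub measurable_id)))).neg


variable {𝓧 Ω : Type*} [m𝓧 : MeasurableSpace 𝓧] [mΩ : MeasurableSpace Ω]


lemma kl_term_ge (c q : ℝ) (hc : 0 ≤ c) (hq : 0 < q) :
    c - q ≤ c * (Real.log c - Real.log q) ∧
      (c * (Real.log c - Real.log q) = c - q ↔ c = q) := by
  rcases eq_or_lt_of_le hc with h0 | h0
  · rw [← h0]
    refine ⟨by simpa using hq.le, ?_⟩
    simp only [zero_mul, zero_sub]
    constructor <;> intro h <;> linarith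
  · have hlog : Real.log (q / c) ≤ q / c - 1 := Real.log_le_sub_one_of_pos (by positivity)
    have hkey : c * (Real.log c - Real.log q) = -(c * Real.log (q / c)) := by
      rw [Real.log_div (ne_of_gt hq) (ne_of_gt h0)]; ring
    constructor
    · rw [hkey]
      have := mul_le_mul_of_nonneg_left hlog (le_of_lt h0)
      have h2 : c * (q / c - 1) = q - c := by field_simp
      nlinarith
    · constructor
      · intro heq
        by_contra hne
        have hne' : q / c ≠ 1 := by
          intro h; apply hne; field_simp at h; linarith
        have hstrict : Real.log (q / c) < q / c - 1 :=
          Real.log_lt_sub_one_of_pos (by positivity) hne'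
        have := mul_lt_mul_of_pos_left hstrict h0
        have h2 : c * (q / c - 1) = q - c := by field_simp
        rw [hkey] at heq
        nlinarith
      · intro heq; subst heq; simp

lemma gibbs (a p : ℝ) (ha : a ∈ Set.Icc (0:ℝ) 1) (hp : p ∈ Set.Ioo (0:ℝ) 1) :
    binEntropy' a ≤ bce a p ∧ (bce a p = binEntropy' a ↔ a = p) := by
  obtain ⟨ha0, ha1⟩ := ha
  obtain ⟨hp0, hp1⟩ := hp
  obtain ⟨h1, h1e⟩ := kl_term_ge a p ha0 hp0
  obtain ⟨h2, h2e⟩ := kl_term_ge (1 - a) (1 - p) (by linarith) (by linarith)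
  have hkey : bce a p - binEntropy' a
      = a * (Real.log a - Real.log p) + (1 - a) * (Real.log (1 - a) - Real.log (1 - p)) := by
    unfold bce binEntropy'; ring
  constructor
  · linarith
  · constructor
    · intro heq
      have hsum : a * (Real.log a - Real.log p)
          + (1 - a) * (Real.log (1 - a) - Real.log (1 - p)) = 0 := by linarith
      have e1 : a * (Real.log a - Real.log p) = a - p := by linarith
      exact h1e.mp e1
    · intro heq
      have e1 : a * (Real.log a - Real.log p) = a - p := h1e.mpr heq
      have e2 : (1 - a) * (Real.log (1 - a) - Real.log (1 - p)) = (1 - a) - (1 - p) :=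
        h2e.mpr (by rw [heq])
      linarith

lemma binEntropy'_nonneg {a : ℝ} (ha : a ∈ Set.Icc (0:ℝ) 1) : 0 ≤ binEntropy' a := by
  obtain ⟨h0, h1⟩ := ha
  unfold binEntropy'
  have l1 : a * Real.log a ≤ 0 :=
    mul_nonpos_of_nonneg_of_nonpos h0 (Real.log_nonpos h0 h1)
  have l2 : (1 - a) * Real.log (1 - a) ≤ 0 :=
    mul_nonpos_of_nonneg_of_nonpos (by linarith) (Real.log_nonpos (by linarith) (by linarith))
  linarith

lemma bce_nonneg {t p : ℝ} (ht : t ∈ Set.Icc (0:ℝ) 1) (hp : p ∈ Set.Ioo (0:ℝ) 1) :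
    0 ≤ bce t p := by
  obtain ⟨h0, h1⟩ := ht
  obtain ⟨hp0, hp1⟩ := hp
  unfold bce
  have l1 : t * Real.log p ≤ 0 :=
    mul_nonpos_of_nonneg_of_nonpos h0 (Real.log_nonpos hp0.le hp1.le)
  have l2 : (1 - t) * Real.log (1 - p) ≤ 0 :=
    mul_nonpos_of_nonneg_of_nonpos (by linarith)
      (Real.log_nonpos (by linarith) (by linarith))
  linarith

/-- joint measurability of condCDF -/
lemma measurable_condCDF_prod {α : Type*} [MeasurableSpace α] (ρ : Measure (α × ℝ)) :
    Measurable fun p : α × ℝ => condCDF ρ p.1 p.2 := by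
  have hrepr : ∀ p : α × ℝ, condCDF ρ p.1 p.2
      = ⨅ q : ℚ, if p.2 < (q : ℝ) then condCDF ρ p.1 q else 1 := by
    intro ⟨a, x⟩
    have hne : Nonempty {r' : ℚ // x < (r' : ℝ)} := by
      obtain ⟨r, hr⟩ := exists_rat_gt x
      exact ⟨⟨r, hr⟩⟩
    rw [← (condCDF ρ a).iInf_rat_gt_eq x]
    apply le_antisymm
    · apply le_ciInf
      intro q
      split_ifs with h
      · refine ciInf_le ⟨0, fun y hy => ?_⟩ (⟨q, h⟩ : {r' : ℚ // x < (r' : ℝ)})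
        obtain ⟨r, rfl⟩ := hy
        exact condCDF_nonneg ρ a r
      · calc ⨅ r : {r' : ℚ // x < r'}, condCDF ρ a r ≤ condCDF ρ a x := by
              rw [(condCDF ρ a).iInf_rat_gt_eq x]
            _ ≤ 1 := condCDF_le_one ρ a x
    · apply le_ciInf
      intro ⟨q, hq⟩
      calc (⨅ q : ℚ, if x < (q : ℝ) then condCDF ρ a q else 1)
          ≤ (if x < (q : ℝ) then condCDF ρ a q else 1) := by
            apply ciInf_le
            refine ⟨0, fun y hy => ?_⟩
            obtain ⟨r, rfl⟩ := hy
            simp only []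
            split_ifs
            · exact condCDF_nonneg ρ a r
            · exact zero_le_one
        _ = condCDF ρ a q := if_pos hq
  simp_rw [hrepr]
  apply Measurable.iInf
  intro q
  exact Measurable.ite (measurableSet_lt measurable_snd measurable_const)
    ((measurable_condCDF ρ q).comp measurable_fst) measurable_const


lemma condexp_indicator_iic (P : Measure Ω) [IsProbabilityMeasure P]
    (X : Ω → 𝓧) (W : Ω → ℝ) (hX : Measurable X) (hW : Measurable W) (z : ℝ) :
    (P⟦W ⁻¹' (Iic z) | MeasurableSpace.comap X m𝓧⟧)
      =ᵐ[P] fun ω => condCDF (P.map fun ω => (X ω, W ω)) (X ω) z := by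
  have hm' : MeasurableSpace.comap X m𝓧 ≤ mΩ := hX.comap_le
  have hfst : (P.map fun ω => (X ω, W ω)).fst = P.map X := Measure.fst_map_prodMk hW
  set ρ : Measure (𝓧 × ℝ) := P.map fun ω => (X ω, W ω) with hρdef
  have hXm' : Measurable[MeasurableSpace.comap X m𝓧] X := measurable_iff_comap_le.mpr le_rfl
  have hg_meas : Measurable[MeasurableSpace.comap X m𝓧] fun ω => condCDF ρ (X ω) z :=
    (measurable_condCDF ρ z).comp hXm'
  have hg_meas0 : Measurable fun ω => condCDF ρ (X ω) z :=
    (measurable_condCDF ρ z).comp hX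
  have hg_bdd : ∀ ω, ‖condCDF ρ (X ω) z‖ ≤ 1 := by
    intro ω
    rw [Real.norm_eq_abs, abs_le]
    exact ⟨by linarith [condCDF_nonneg ρ (X ω) z], condCDF_le_one ρ (X ω) z⟩
  have hg_int : Integrable (fun ω => condCDF ρ (X ω) z) P :=
    Integrable.mono' (integrable_const 1) hg_meas0.aestronglyMeasurable
      (Filter.Eventually.of_forall hg_bdd)
  have hf_int : Integrable ((W ⁻¹' Iic z).indicator fun _ => (1:ℝ)) P :=
    (integrable_const (1:ℝ)).indicator (hW measurableSet_Iic)
  symm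
  refine ae_eq_condExp_of_forall_setIntegral_eq hm' hf_int
    (fun s _ _ => hg_int.integrableOn) ?_
    (hg_meas.stronglyMeasurable.aestronglyMeasurable)
  rintro S ⟨s, hs, rfl⟩ -
  have hLHS : ∫ ω in X ⁻¹' s, condCDF ρ (X ω) z ∂P = (ρ (s ×ˢ Iic z)).toReal := by
    rw [← measureReal_def, ← setIntegral_condCDF ρ z hs, hfst,
      setIntegral_map hs ((measurable_condCDF ρ z).aestronglyMeasurable) hX.aemeasurable]
  have hpre : (fun ω => (X ω, W ω)) ⁻¹' (s ×ˢ Iic z) = X ⁻¹' s ∩ W ⁻¹' Iic z := by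
    ext ω; simp [Set.mem_prod]
  have hRHS : ∫ ω in X ⁻¹' s, (W ⁻¹' Iic z).indicator (fun _ => (1:ℝ)) ω ∂P
      = (P (X ⁻¹' s ∩ W ⁻¹' Iic z)).toReal := by
    rw [setIntegral_indicator (hW measurableSet_Iic)]
    simp [integral_const, Set.inter_comm, Measure.real]
  rw [hLHS, hRHS, hρdef, Measure.map_apply (hX.prodMk hW) (hs.prod measurableSet_Iic), hpre]


lemma condexp_indicator_T (P : Measure Ω) [IsProbabilityMeasure P]
    (X : Ω → 𝓧) (T : Ω → Bool) (e : 𝓧 → ℝ) (hX : Measurable X) (hT : Measurable T)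
    (heX : P[fun ω => (if T ω then (1 : ℝ) else 0) |
        MeasurableSpace.comap X m𝓧] =ᵐ[P] fun ω => e (X ω)) (t : Bool) :
    (P⟦T ⁻¹' {t} | MeasurableSpace.comap X m𝓧⟧)
      =ᵐ[P] fun ω => if t then e (X ω) else 1 - e (X ω) := by
  have hm' : MeasurableSpace.comap X m𝓧 ≤ mΩ := hX.comap_le
  have hind : (T ⁻¹' {true}).indicator (fun _ => (1:ℝ)) = fun ω => if T ω then 1 else 0 := by
    funext ω; simp [Set.indicator, Set.mem_preimage]
  cases t with
  | true => simpa [MeasureTheory.condExp, hind] using heX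
  | false =>
    have hcompl : T ⁻¹' {false} = (T ⁻¹' {true})ᶜ := by
      ext ω; simp
    have hsub : (T ⁻¹' {false}).indicator (fun _ => (1:ℝ))
        = (fun _ => (1:ℝ)) - (T ⁻¹' {true}).indicator (fun _ => (1:ℝ)) := by
      rw [hcompl, Set.indicator_compl]
    have h1 : Integrable (fun _ : Ω => (1:ℝ)) P := integrable_const 1
    have h2 : Integrable ((T ⁻¹' {true}).indicator fun _ => (1:ℝ)) P :=
      h1.indicator (hT (by simp))
    calc (P⟦T ⁻¹' {false} | MeasurableSpace.comap X m𝓧⟧)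
        =ᵐ[P] P[(fun _ => (1:ℝ)) - (T ⁻¹' {true}).indicator (fun _ => (1:ℝ)) |
            MeasurableSpace.comap X m𝓧] := by rw [hsub]
      _ =ᵐ[P] (P[(fun _ => (1:ℝ)) | MeasurableSpace.comap X m𝓧])
          - (P[(T ⁻¹' {true}).indicator (fun _ => (1:ℝ)) | MeasurableSpace.comap X m𝓧]) :=
          condExp_sub h1 h2 _
      _ =ᵐ[P] fun ω => if (false : Bool) then e (X ω) else 1 - e (X ω) := by
          have hc : P[(fun _ => (1:ℝ)) | MeasurableSpace.comap X m𝓧] = fun _ => (1:ℝ) :=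
            condExp_const hm' 1
          have : (P[(T ⁻¹' {true}).indicator (fun _ => (1:ℝ)) |
              MeasurableSpace.comap X m𝓧]) =ᵐ[P] fun ω => e (X ω) := by
            rw [hind]; exact heX
          filter_upwards [this] with ω hω
          simp [hc, hω, Pi.sub_apply]

lemma meas_inter_eq_integral (P : Measure Ω) [IsProbabilityMeasure P]
    (X : Ω → 𝓧) (hX : Measurable X) {C : Set Ω} (hC : MeasurableSet C)
    {φ : 𝓧 → ℝ} (hφ : Measurable φ)
    (hcond : (P⟦C | MeasurableSpace.comap X m𝓧⟧) =ᵐ[P] fun ω => φ (X ω))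
    {s : Set 𝓧} (hs : MeasurableSet s) :
    (P (X ⁻¹' s ∩ C)).toReal = ∫ x in s, φ x ∂(P.map X) := by
  have hm' : MeasurableSpace.comap X m𝓧 ≤ mΩ := hX.comap_le
  have hXs : MeasurableSet[MeasurableSpace.comap X m𝓧] (X ⁻¹' s) := ⟨s, hs, rfl⟩
  have hint : Integrable (C.indicator fun _ => (1:ℝ)) P := (integrable_const 1).indicator hC
  have h1 : ∫ ω in X ⁻¹' s, C.indicator (fun _ => (1:ℝ)) ω ∂P = (P (X ⁻¹' s ∩ C)).toReal := by
    rw [setIntegral_indicator hC]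
    simp [integral_const, Set.inter_comm, Measure.real]
  have h2 : ∫ ω in X ⁻¹' s, (P⟦C | MeasurableSpace.comap X m𝓧⟧) ω ∂P
      = ∫ ω in X ⁻¹' s, C.indicator (fun _ => (1:ℝ)) ω ∂P :=
    setIntegral_condExp hm' hint hXs
  have h3 : ∫ ω in X ⁻¹' s, (P⟦C | MeasurableSpace.comap X m𝓧⟧) ω ∂P
      = ∫ ω in X ⁻¹' s, φ (X ω) ∂P :=
    setIntegral_congr_ae (hX hs) (hcond.mono fun ω hω => fun _ => hω)
  have h4 : ∫ x in s, φ x ∂(P.map X) = ∫ ω in X ⁻¹' s, φ (X ω) ∂P :=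
    setIntegral_map hs hφ.aestronglyMeasurable hX.aemeasurable
  rw [h4, ← h3, h2, h1]

lemma restrict_map_eq_withDensity (P : Measure Ω) [IsProbabilityMeasure P]
    (X : Ω → 𝓧) (hX : Measurable X) {C : Set Ω} (hC : MeasurableSet C)
    {φ : 𝓧 → ℝ} (hφ : Measurable φ)
    (hφ01 : ∀ᵐ x ∂(P.map X), φ x ∈ Icc (0:ℝ) 1)
    (hcond : (P⟦C | MeasurableSpace.comap X m𝓧⟧) =ᵐ[P] fun ω => φ (X ω)) :
    (P.restrict C).map X = (P.map X).withDensity (fun x => ENNReal.ofReal (φ x)) := by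
  haveI : IsProbabilityMeasure (P.map X) := Measure.isProbabilityMeasure_map hX.aemeasurable
  have hφint : Integrable φ (P.map X) := by
    refine Integrable.mono' (integrable_const 1) hφ.aestronglyMeasurable ?_
    filter_upwards [hφ01] with x hx
    rw [Real.norm_eq_abs, abs_le]
    exact ⟨by linarith [hx.1], hx.2⟩
  ext s hs
  rw [Measure.map_apply hX hs, Measure.restrict_apply (hX hs), withDensity_apply _ hs]
  have hkey := meas_inter_eq_integral P X hX hC hφ hcond hs
  have hfin : P (X ⁻¹' s ∩ C) ≠ ⊤ := measure_ne_top _ _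
  rw [← ENNReal.ofReal_toReal hfin, hkey,
    ofReal_integral_eq_lintegral_ofReal hφint.integrableOn
      (ae_restrict_of_ae (hφ01.mono fun x hx => hx.1))]

lemma lintegral_restrict_eq (P : Measure Ω) [IsProbabilityMeasure P]
    (X : Ω → 𝓧) (hX : Measurable X) {C : Set Ω} (hC : MeasurableSet C)
    {φ : 𝓧 → ℝ} (hφ : Measurable φ)
    (hφ01 : ∀ᵐ x ∂(P.map X), φ x ∈ Icc (0:ℝ) 1)
    (hcond : (P⟦C | MeasurableSpace.comap X m𝓧⟧) =ᵐ[P] fun ω => φ (X ω))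
    (ψ : 𝓧 → ℝ≥0∞) (hψ : Measurable ψ) :
    ∫⁻ ω in C, ψ (X ω) ∂P = ∫⁻ x, ENNReal.ofReal (φ x) * ψ x ∂(P.map X) := by
  rw [← lintegral_map hψ hX, restrict_map_eq_withDensity P X hX hC hφ hφ01 hcond]
  rw [show (fun x => ENNReal.ofReal (φ x)) = ENNReal.ofReal ∘ φ from rfl,
    lintegral_withDensity_eq_lintegral_mul _ (ENNReal.measurable_ofReal.comp hφ) hψ]
  rfl

lemma hcond1_gen [StandardBorelSpace Ω] (P : Measure Ω) [IsProbabilityMeasure P]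
    (X : Ω → 𝓧) (T : Ω → Bool) (Yt : Ω → ℝ)
    (hX : Measurable X) (hT : Measurable T) (hYt : Measurable Yt)
    (hig' : CondIndepFun (MeasurableSpace.comap X m𝓧) hX.comap_le Yt T P)
    {et : 𝓧 → ℝ}
    (hcondT : (P⟦T ⁻¹' {t} | MeasurableSpace.comap X m𝓧⟧) =ᵐ[P] fun ω => et (X ω))
    (z : ℝ) :
    (P⟦T ⁻¹' {t} ∩ Yt ⁻¹' Iic z | MeasurableSpace.comap X m𝓧⟧)
      =ᵐ[P] fun ω => condCDF (P.map fun ω => (X ω, Yt ω)) (X ω) z * et (X ω) := by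
  have hprod := (condIndepFun_iff_condExp_inter_preimage_eq_mul hYt hT).mp hig'
    (Iic z) {t} measurableSet_Iic (MeasurableSet.singleton t)
  rw [Set.inter_comm]
  calc (P⟦Yt ⁻¹' Iic z ∩ T ⁻¹' {t} | MeasurableSpace.comap X m𝓧⟧)
      =ᵐ[P] fun ω => (P⟦Yt ⁻¹' Iic z | MeasurableSpace.comap X m𝓧⟧) ω
          * (P⟦T ⁻¹' {t} | MeasurableSpace.comap X m𝓧⟧) ω := hprod
    _ =ᵐ[P] fun ω => condCDF (P.map fun ω => (X ω, Yt ω)) (X ω) z * et (X ω) := by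
        filter_upwards [condexp_indicator_iic P X Yt hX hYt z, hcondT] with ω h1 h2
        rw [h1, h2]

lemma groupEntropy_eq (P : Measure Ω) [IsProbabilityMeasure P]
    (X : Ω → 𝓧) (T : Ω → Bool) (Z : Ω → ℝ)
    (hX : Measurable X) (hT : Measurable T) (hZ : Measurable Z)
    (hindepV : IndepFun (fun ω => (X ω, T ω)) Z P)
    (t : Bool) {et : 𝓧 → ℝ} (het : Measurable et)
    (het01 : ∀ᵐ x ∂(P.map X), et x ∈ Icc (0:ℝ) 1)
    (hcondT : (P⟦T ⁻¹' {t} | MeasurableSpace.comap X m𝓧⟧) =ᵐ[P] fun ω => et (X ω))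
    (F : 𝓧 → ℝ → ℝ) (hF : Measurable fun p : 𝓧 × ℝ => F p.1 p.2) :
    groupEntropy P X T Z t F
      = ∫⁻ p, ENNReal.ofReal (et p.2 * binEntropy' (F p.2 p.1)) ∂((P.map Z).prod (P.map X)) := by
  haveI : IsProbabilityMeasure (P.map Z) := Measure.isProbabilityMeasure_map hZ.aemeasurable
  haveI : IsProbabilityMeasure (P.map fun ω => (X ω, T ω)) :=
    Measure.isProbabilityMeasure_map (hX.prodMk hT).aemeasurable
  set h' : ℝ × (𝓧 × Bool) → ℝ≥0∞ := fun q =>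
    (if q.2.2 = t then 1 else 0) * ENNReal.ofReal (binEntropy' (F q.2.1 q.1)) with hh'def
  have hFE : Measurable fun q : ℝ × (𝓧 × Bool) => ENNReal.ofReal (binEntropy' (F q.2.1 q.1)) :=
    ENNReal.measurable_ofReal.comp (measurable_binEntropy'.comp
      (hF.comp ((measurable_fst.comp measurable_snd).prodMk measurable_fst)))
  have hh' : Measurable h' := by
    apply Measurable.mul ?_ hFE
    exact measurable_const.ite
      ((measurable_snd.comp measurable_snd) (MeasurableSet.singleton t)) measurable_const
  have hpt : ∀ ω, ENNReal.ofReal ((if T ω = t then 1 else 0) * binEntropy' (F (X ω) (Z ω)))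
      = h' (Z ω, (X ω, T ω)) := by
    intro ω
    by_cases h : T ω = t <;> simp [hh'def, h]
  have hlaw : P.map (fun ω => (Z ω, (X ω, T ω)))
      = (P.map Z).prod (P.map fun ω => (X ω, T ω)) :=
    (indepFun_iff_map_prod_eq_prod_map_map hZ.aemeasurable
      (hX.prodMk hT).aemeasurable).mp hindepV.symm
  have hinner : ∀ z, ∫⁻ v, h' (z, v) ∂(P.map fun ω => (X ω, T ω))
      = ∫⁻ x, ENNReal.ofReal (et x * binEntropy' (F x z)) ∂(P.map X) := by
    intro z
    have hm : Measurable fun v : 𝓧 × Bool => h' (z, v) := hh'.comp measurable_prodMk_left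
    rw [lintegral_map hm (hX.prodMk hT)]
    have hpt2 : ∀ ω, h' (z, (X ω, T ω))
        = (T ⁻¹' {t}).indicator (fun ω => ENNReal.ofReal (binEntropy' (F (X ω) z))) ω := by
      intro ω
      by_cases h : T ω = t <;> simp [hh'def, Set.indicator, h]
    simp_rw [hpt2]
    rw [lintegral_indicator (hT (MeasurableSet.singleton t))]
    rw [lintegral_restrict_eq P X hX (hT (MeasurableSet.singleton t)) het het01 hcondT
      (fun x => ENNReal.ofReal (binEntropy' (F x z)))
      (ENNReal.measurable_ofReal.comp (measurable_binEntropy'.comp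
        (hF.comp (measurable_id.prodMk measurable_const))))]
    refine lintegral_congr_ae ?_
    filter_upwards [het01] with x hx
    rw [ENNReal.ofReal_mul hx.1]
  have hprodmeas : Measurable fun p : ℝ × 𝓧 => ENNReal.ofReal (et p.2 * binEntropy' (F p.2 p.1)) :=
    ENNReal.measurable_ofReal.comp ((het.comp measurable_snd).mul
      (measurable_binEntropy'.comp (hF.comp (measurable_snd.prodMk measurable_fst))))
  calc groupEntropy P X T Z t F
      = ∫⁻ ω, h' (Z ω, (X ω, T ω)) ∂P := by
        unfold groupEntropy; exact lintegral_congr hpt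
    _ = ∫⁻ q, h' q ∂(P.map fun ω => (Z ω, (X ω, T ω))) :=
        (lintegral_map hh' (hZ.prodMk (hX.prodMk hT))).symm
    _ = ∫⁻ z, ∫⁻ v, h' (z, v) ∂(P.map fun ω => (X ω, T ω)) ∂(P.map Z) := by
        rw [hlaw, lintegral_prod _ hh'.aemeasurable]
    _ = ∫⁻ z, ∫⁻ x, ENNReal.ofReal (et x * binEntropy' (F x z)) ∂(P.map X) ∂(P.map Z) := by
        simp_rw [hinner]
    _ = ∫⁻ p, ENNReal.ofReal (et p.2 * binEntropy' (F p.2 p.1)) ∂((P.map Z).prod (P.map X)) :=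
        (lintegral_prod _ hprodmeas.aemeasurable).symm

lemma groupLoss_eq (P : Measure Ω) [IsProbabilityMeasure P]
    (X : Ω → 𝓧) (T : Ω → Bool) (Y Z : Ω → ℝ) (Yt : Ω → ℝ)
    (hX : Measurable X) (hT : Measurable T) (hZ : Measurable Z) (hYt : Measurable Yt)
    (t : Bool)
    (hcons : ∀ ω, T ω = t → Y ω = Yt ω)
    (hindepV : IndepFun (fun ω => (X ω, T ω, Yt ω)) Z P)
    {et : 𝓧 → ℝ} (het : Measurable et)
    (het01 : ∀ᵐ x ∂(P.map X), et x ∈ Icc (0:ℝ) 1)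
    (hcondT : (P⟦T ⁻¹' {t} | MeasurableSpace.comap X m𝓧⟧) =ᵐ[P] fun ω => et (X ω))
    {F : 𝓧 → ℝ → ℝ} (hF : Measurable fun p : 𝓧 × ℝ => F p.1 p.2)
    (hF01 : ∀ x z, F x z ∈ Icc (0:ℝ) 1)
    (hcond1 : ∀ z, (P⟦T ⁻¹' {t} ∩ Yt ⁻¹' Iic z | MeasurableSpace.comap X m𝓧⟧)
        =ᵐ[P] fun ω => F (X ω) z * et (X ω))
    (g : ℝ × 𝓧 → ℝ) (hg : Measurable g) (hg01 : ∀ p, g p ∈ Ioo (0:ℝ) 1) :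
    groupLoss P X T Y Z t g
      = ∫⁻ p, ENNReal.ofReal (et p.2 * bce (F p.2 p.1) (g p)) ∂((P.map Z).prod (P.map X)) := by
  haveI : IsProbabilityMeasure (P.map Z) := Measure.isProbabilityMeasure_map hZ.aemeasurable
  have hV : Measurable fun ω => (X ω, T ω, Yt ω) := hX.prodMk (hT.prodMk hYt)
  haveI : IsProbabilityMeasure (P.map fun ω => (X ω, T ω, Yt ω)) :=
    Measure.isProbabilityMeasure_map hV.aemeasurable
  set h' : ℝ × (𝓧 × Bool × ℝ) → ℝ≥0∞ := fun q =>
    (if q.2.2.1 = t then 1 else 0) *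
      (if q.2.2.2 ≤ q.1 then ENNReal.ofReal (bce 1 (g (q.1, q.2.1)))
        else ENNReal.ofReal (bce 0 (g (q.1, q.2.1)))) with hh'def
  have hgq : Measurable fun q : ℝ × (𝓧 × Bool × ℝ) => g (q.1, q.2.1) :=
    hg.comp (measurable_fst.prodMk (measurable_fst.comp measurable_snd))
  have hh' : Measurable h' := by
    refine Measurable.mul ?_ ?_
    · exact measurable_const.ite
        ((measurable_fst.comp (measurable_snd.comp measurable_snd)) (MeasurableSet.singleton t))
        measurable_const
    · refine Measurable.ite ?_ ?_ ?_
      · exact measurableSet_le (measurable_snd.comp (measurable_snd.comp measurable_snd))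
          measurable_fst
      · exact ENNReal.measurable_ofReal.comp ((measurable_bce_const 1).comp hgq)
      · exact ENNReal.measurable_ofReal.comp ((measurable_bce_const 0).comp hgq)
  have hpt : ∀ ω, ENNReal.ofReal
      ((if T ω = t then 1 else 0) * bce (if Y ω ≤ Z ω then 1 else 0) (g (Z ω, X ω)))
      = h' (Z ω, (X ω, T ω, Yt ω)) := by
    intro ω
    by_cases h : T ω = t
    · have hy : Y ω = Yt ω := hcons ω h
      by_cases h2 : Yt ω ≤ Z ω <;> simp [hh'def, h, h2, hy]
    · simp [hh'def, h]
  have hlaw : P.map (fun ω => (Z ω, (X ω, T ω, Yt ω)))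
      = (P.map Z).prod (P.map fun ω => (X ω, T ω, Yt ω)) :=
    (indepFun_iff_map_prod_eq_prod_map_map hZ.aemeasurable hV.aemeasurable).mp hindepV.symm
  -- conditional expectation for the complement event
  have hcond2 : ∀ z, (P⟦T ⁻¹' {t} ∩ Yt ⁻¹' Ioi z | MeasurableSpace.comap X m𝓧⟧)
      =ᵐ[P] fun ω => (1 - F (X ω) z) * et (X ω) := by
    intro z
    have hsetdiff : T ⁻¹' {t} ∩ Yt ⁻¹' Ioi z = T ⁻¹' {t} \ (T ⁻¹' {t} ∩ Yt ⁻¹' Iic z) := by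
      ext ω
      simp only [mem_inter_iff, mem_preimage, mem_singleton_iff, mem_Ioi, mem_diff, mem_Iic]
      push_neg
      tauto
    have hsub : (T ⁻¹' {t} ∩ Yt ⁻¹' Ioi z).indicator (fun _ => (1:ℝ))
        = (T ⁻¹' {t}).indicator (fun _ => (1:ℝ))
          - (T ⁻¹' {t} ∩ Yt ⁻¹' Iic z).indicator (fun _ => (1:ℝ)) := by
      rw [hsetdiff, Set.indicator_sdiff Set.inter_subset_left]
    have hi1 : Integrable ((T ⁻¹' {t}).indicator fun _ => (1:ℝ)) P :=
      (integrable_const 1).indicator (hT (MeasurableSet.singleton t))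
    have hi2 : Integrable ((T ⁻¹' {t} ∩ Yt ⁻¹' Iic z).indicator fun _ => (1:ℝ)) P :=
      (integrable_const 1).indicator ((hT (MeasurableSet.singleton t)).inter (hYt measurableSet_Iic))
    calc (P⟦T ⁻¹' {t} ∩ Yt ⁻¹' Ioi z | MeasurableSpace.comap X m𝓧⟧)
        =ᵐ[P] (P⟦T ⁻¹' {t} | MeasurableSpace.comap X m𝓧⟧)
          - (P⟦T ⁻¹' {t} ∩ Yt ⁻¹' Iic z | MeasurableSpace.comap X m𝓧⟧) := by
          rw [show (P⟦T ⁻¹' {t} ∩ Yt ⁻¹' Ioi z | MeasurableSpace.comap X m𝓧⟧)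
            = P[(T ⁻¹' {t} ∩ Yt ⁻¹' Ioi z).indicator (fun _ => (1:ℝ)) |
                MeasurableSpace.comap X m𝓧] from rfl, hsub]
          exact condExp_sub hi1 hi2 _
      _ =ᵐ[P] fun ω => (1 - F (X ω) z) * et (X ω) := by
          filter_upwards [hcondT, hcond1 z] with ω h1 h2
          simp only [Pi.sub_apply, h1, h2]
          ring
  -- inner integral computation
  have hinner : ∀ z, ∫⁻ v, h' (z, v) ∂(P.map fun ω => (X ω, T ω, Yt ω))
      = ∫⁻ x, ENNReal.ofReal (et x * bce (F x z) (g (z, x))) ∂(P.map X) := by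
    intro z
    have hm : Measurable fun v : 𝓧 × Bool × ℝ => h' (z, v) := hh'.comp measurable_prodMk_left
    rw [lintegral_map hm hV]
    have hC1 : MeasurableSet (T ⁻¹' {t} ∩ Yt ⁻¹' Iic z) :=
      (hT (MeasurableSet.singleton t)).inter (hYt measurableSet_Iic)
    have hC2 : MeasurableSet (T ⁻¹' {t} ∩ Yt ⁻¹' Ioi z) :=
      (hT (MeasurableSet.singleton t)).inter (hYt measurableSet_Ioi)
    have hpt2 : ∀ ω, h' (z, (X ω, T ω, Yt ω))
        = (T ⁻¹' {t} ∩ Yt ⁻¹' Iic z).indicator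
            (fun ω => ENNReal.ofReal (bce 1 (g (z, X ω)))) ω
          + (T ⁻¹' {t} ∩ Yt ⁻¹' Ioi z).indicator
            (fun ω => ENNReal.ofReal (bce 0 (g (z, X ω)))) ω := by
      intro ω
      by_cases h : T ω = t
      · by_cases h2 : Yt ω ≤ z
        · simp [hh'def, Set.indicator, h, h2, not_lt.mpr h2]
        · simp [hh'def, Set.indicator, h, h2, lt_of_not_ge h2]
      · simp [hh'def, Set.indicator, h]
    simp_rw [hpt2]
    rw [lintegral_add_left ((show Measurable fun ω : Ω => ENNReal.ofReal (bce 1 (g (z, X ω))) from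
      ENNReal.measurable_ofReal.comp ((measurable_bce_const 1).comp
        (hg.comp (measurable_const.prodMk hX)))).indicator hC1)]
    rw [lintegral_indicator hC1, lintegral_indicator hC2]
    rw [lintegral_restrict_eq P X hX hC1 (φ := fun x => F x z * et x)
      (show Measurable fun x : 𝓧 => F x z * et x from
        (hF.comp (measurable_id.prodMk measurable_const)).mul het)
      ?_ (hcond1 z) (fun x => ENNReal.ofReal (bce 1 (g (z, x))))
      (show Measurable fun x : 𝓧 => ENNReal.ofReal (bce 1 (g (z, x))) from
        ENNReal.measurable_ofReal.comp ((measurable_bce_const 1).comp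
          (hg.comp (measurable_const.prodMk measurable_id))))]
    rotate_left
    · filter_upwards [het01] with x hx
      obtain ⟨hF0, hF1⟩ := hF01 x z
      exact ⟨mul_nonneg hF0 hx.1, mul_le_one₀ hF1 hx.1 hx.2⟩
    rw [lintegral_restrict_eq P X hX hC2 (φ := fun x => (1 - F x z) * et x)
      (show Measurable fun x : 𝓧 => (1 - F x z) * et x from
        (measurable_const.sub (hF.comp (measurable_id.prodMk measurable_const))).mul het)
      ?_ (hcond2 z) (fun x => ENNReal.ofReal (bce 0 (g (z, x))))
      (show Measurable fun x : 𝓧 => ENNReal.ofReal (bce 0 (g (z, x))) from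
        ENNReal.measurable_ofReal.comp ((measurable_bce_const 0).comp
          (hg.comp (measurable_const.prodMk measurable_id))))]
    rotate_left
    · filter_upwards [het01] with x hx
      obtain ⟨hF0, hF1⟩ := hF01 x z
      constructor
      · exact mul_nonneg (by linarith) hx.1
      · exact mul_le_one₀ (by linarith) hx.1 hx.2
    rw [← lintegral_add_left (show Measurable fun x : 𝓧 =>
        ENNReal.ofReal (F x z * et x) * ENNReal.ofReal (bce 1 (g (z, x))) from
      (ENNReal.measurable_ofReal.comp
        ((hF.comp (measurable_id.prodMk measurable_const)).mul het)).mul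
        (ENNReal.measurable_ofReal.comp ((measurable_bce_const 1).comp
          (hg.comp (measurable_const.prodMk measurable_id)))))]
    refine lintegral_congr_ae ?_
    filter_upwards [het01] with x hx
    obtain ⟨hF0, hF1⟩ := hF01 x z
    obtain ⟨hg0, hg1⟩ := hg01 (z, x)
    have hb1 : 0 ≤ bce 1 (g (z, x)) := bce_nonneg ⟨zero_le_one, le_refl 1⟩ (hg01 (z, x))
    have hb0 : 0 ≤ bce 0 (g (z, x)) := bce_nonneg ⟨le_refl 0, zero_le_one⟩ (hg01 (z, x))
    rw [← ENNReal.ofReal_mul (mul_nonneg hF0 hx.1),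
      ← ENNReal.ofReal_mul (mul_nonneg (by linarith) hx.1),
      ← ENNReal.ofReal_add (mul_nonneg (mul_nonneg hF0 hx.1) hb1)
        (mul_nonneg (mul_nonneg (by linarith) hx.1) hb0)]
    congr 1
    simp only [bce]
    ring
  -- main calc
  have hprodmeas : Measurable fun p : ℝ × 𝓧 => ENNReal.ofReal (et p.2 * bce (F p.2 p.1) (g p)) := by
    refine ENNReal.measurable_ofReal.comp (Measurable.mul (het.comp measurable_snd) ?_)
    have : (fun p : ℝ × 𝓧 => bce (F p.2 p.1) (g p))
        = fun p => -((F p.2 p.1) * Real.log (g p) + (1 - F p.2 p.1) * Real.log (1 - g p)) := by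
      funext p; rfl
    rw [this]
    have hFp : Measurable fun p : ℝ × 𝓧 => F p.2 p.1 :=
      hF.comp (measurable_snd.prodMk measurable_fst)
    exact ((hFp.mul (Real.measurable_log.comp hg)).add
      ((measurable_const.sub hFp).mul
        (Real.measurable_log.comp (measurable_const.sub hg)))).neg
  calc groupLoss P X T Y Z t g
      = ∫⁻ ω, h' (Z ω, (X ω, T ω, Yt ω)) ∂P := by
        unfold groupLoss; exact lintegral_congr hpt
    _ = ∫⁻ q, h' q ∂(P.map fun ω => (Z ω, (X ω, T ω, Yt ω))) :=
        (lintegral_map hh' (hZ.prodMk hV)).symm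
    _ = ∫⁻ z, ∫⁻ v, h' (z, v) ∂(P.map fun ω => (X ω, T ω, Yt ω)) ∂(P.map Z) := by
        rw [hlaw, lintegral_prod _ hh'.aemeasurable]
    _ = ∫⁻ z, ∫⁻ x, ENNReal.ofReal (et x * bce (F x z) (g (z, x))) ∂(P.map X) ∂(P.map Z) := by
        simp_rw [hinner]
    _ = ∫⁻ p, ENNReal.ofReal (et p.2 * bce (F p.2 p.1) (g p)) ∂((P.map Z).prod (P.map X)) :=
        (lintegral_prod _ hprodmeas.aemeasurable).symm

end Aux

/-- (Proposition 1: Optimal solution for `g₀` and `g₁`.) Under consistency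
(`Y = Y₁` on `{T = 1}`, `Y = Y₀` on `{T = 0}`), ignorability (`(Y₀, Y₁)` conditionally
independent of `T` given `σ(X)`), positivity (a measurable propensity
`e` with `P(T = 1 | X) = e(X)` a.s. and `0 < e(x) < 1` for `μ_X`-a.e. `x`), and `Z`
independent of `(X, T, Y₀, Y₁)` with law `ν = P.map Z`: for all jointly measurable
`g₀, g₁ : ℝ × 𝒳 → (0,1)`,
`g-loss*(g₀, g₁) ≥ E[1_{T=0}·H(F₀(X, Z))] + E[1_{T=1}·H(F₁(X, Z))]`,
and any pair attaining this (finite) infimum satisfies `g₀(z, x) = F₀(x, z)` and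
`g₁(z, x) = F₁(x, z)` for `ν ⊗ μ_X`-a.e. `(z, x)` — on the full covariate distribution. -/
theorem ccn_gloss_optimal
    {𝓧 : Type*} [MeasurableSpace 𝓧] [StandardBorelSpace 𝓧]
    {Ω : Type*} [MeasurableSpace Ω] [StandardBorelSpace Ω] [Nonempty Ω]
    (P : Measure Ω) [IsProbabilityMeasure P]
    (X : Ω → 𝓧) (T : Ω → Bool) (Y₀ Y₁ Y Z : Ω → ℝ)
    (hX : Measurable X) (hT : Measurable T) (hY₀ : Measurable Y₀) (hY₁ : Measurable Y₁)
    (hZ : Measurable Z)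
    -- consistency: the observed outcome is the potential outcome of the assigned treatment
    (hcons : ∀ ω, Y ω = if T ω then Y₁ ω else Y₀ ω)
    -- ignorability: (Y₀, Y₁) ⫫ T | σ(X)
    (hig : CondIndepFun (MeasurableSpace.comap X inferInstance) hX.comap_le
      (fun ω => (Y₀ ω, Y₁ ω)) T P)
    -- positivity
    (e : 𝓧 → ℝ) (he : Measurable e)
    (heX : P[fun ω => (if T ω then (1 : ℝ) else 0) |
        MeasurableSpace.comap X inferInstance] =ᵐ[P] fun ω => e (X ω))
    (he01 : ∀ᵐ x ∂(P.map X), e x ∈ Set.Ioo (0 : ℝ) 1)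
    -- Z independent of (X, T, Y₀, Y₁)
    (hindep : IndepFun (fun ω => (X ω, T ω, Y₀ ω, Y₁ ω)) Z P) :
    ∀ g₀ g₁ : ℝ × 𝓧 → ℝ, Measurable g₀ → Measurable g₁ →
      (∀ p, g₀ p ∈ Set.Ioo (0 : ℝ) 1) → (∀ p, g₁ p ∈ Set.Ioo (0 : ℝ) 1) →
      (groupLoss P X T Y Z false g₀ + groupLoss P X T Y Z true g₁
          ≥ groupEntropy P X T Z false (fun x z => condCDF (P.map fun ω => (X ω, Y₀ ω)) x z)
            + groupEntropy P X T Z true (fun x z => condCDF (P.map fun ω => (X ω, Y₁ ω)) x z))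
      ∧ (groupEntropy P X T Z false (fun x z => condCDF (P.map fun ω => (X ω, Y₀ ω)) x z)
            + groupEntropy P X T Z true (fun x z => condCDF (P.map fun ω => (X ω, Y₁ ω)) x z) ≠ ⊤ →
          groupLoss P X T Y Z false g₀ + groupLoss P X T Y Z true g₁
            = groupEntropy P X T Z false (fun x z => condCDF (P.map fun ω => (X ω, Y₀ ω)) x z)
              + groupEntropy P X T Z true (fun x z => condCDF (P.map fun ω => (X ω, Y₁ ω)) x z) →
          (∀ᵐ p ∂((P.map Z).prod (P.map X)),
              g₀ p = condCDF (P.map fun ω => (X ω, Y₀ ω)) p.2 p.1)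
            ∧ ∀ᵐ p ∂((P.map Z).prod (P.map X)),
                g₁ p = condCDF (P.map fun ω => (X ω, Y₁ ω)) p.2 p.1) := by

  intro g₀ g₁ hg₀ hg₁ hg₀01 hg₁01
  haveI hPX : IsProbabilityMeasure (P.map X) := Measure.isProbabilityMeasure_map hX.aemeasurable
  haveI hPZ : IsProbabilityMeasure (P.map Z) := Measure.isProbabilityMeasure_map hZ.aemeasurable
  set F₀ : 𝓧 → ℝ → ℝ := fun x z => condCDF (P.map fun ω => (X ω, Y₀ ω)) x z with hF₀def
  set F₁ : 𝓧 → ℝ → ℝ := fun x z => condCDF (P.map fun ω => (X ω, Y₁ ω)) x z with hF₁def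
  have hF₀ : Measurable fun p : 𝓧 × ℝ => F₀ p.1 p.2 := measurable_condCDF_prod _
  have hF₁ : Measurable fun p : 𝓧 × ℝ => F₁ p.1 p.2 := measurable_condCDF_prod _
  have hF₀01 : ∀ x z, F₀ x z ∈ Set.Icc (0:ℝ) 1 :=
    fun x z => ⟨condCDF_nonneg _ _ _, condCDF_le_one _ _ _⟩
  have hF₁01 : ∀ x z, F₁ x z ∈ Set.Icc (0:ℝ) 1 :=
    fun x z => ⟨condCDF_nonneg _ _ _, condCDF_le_one _ _ _⟩
  set e₀ : 𝓧 → ℝ := fun x => 1 - e x with he₀def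
  have he₀m : Measurable e₀ := measurable_const.sub he
  have he₀01 : ∀ᵐ x ∂(P.map X), e₀ x ∈ Set.Icc (0:ℝ) 1 :=
    he01.mono fun x hx => ⟨by simp only [he₀def]; linarith [hx.2], by
      simp only [he₀def]; linarith [hx.1]⟩
  have he₁01 : ∀ᵐ x ∂(P.map X), e x ∈ Set.Icc (0:ℝ) 1 :=
    he01.mono fun x hx => ⟨hx.1.le, hx.2.le⟩
  have hcT := condexp_indicator_T P X T e hX hT heX
  have hcT₁ : (P⟦T ⁻¹' {true} | MeasurableSpace.comap X inferInstance⟧)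
      =ᵐ[P] fun ω => e (X ω) := by simpa using hcT true
  have hcT₀ : (P⟦T ⁻¹' {false} | MeasurableSpace.comap X inferInstance⟧)
      =ᵐ[P] fun ω => e₀ (X ω) := by simpa using hcT false
  have hig₀ : CondIndepFun (MeasurableSpace.comap X inferInstance) hX.comap_le Y₀ T P :=
    hig.comp measurable_fst measurable_id
  have hig₁ : CondIndepFun (MeasurableSpace.comap X inferInstance) hX.comap_le Y₁ T P :=
    hig.comp measurable_snd measurable_id
  have hcond1₀ : ∀ z, (P⟦T ⁻¹' {false} ∩ Y₀ ⁻¹' Set.Iic z |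
      MeasurableSpace.comap X inferInstance⟧) =ᵐ[P] fun ω => F₀ (X ω) z * e₀ (X ω) :=
    fun z => hcond1_gen P X T Y₀ hX hT hY₀ hig₀ hcT₀ z
  have hcond1₁ : ∀ z, (P⟦T ⁻¹' {true} ∩ Y₁ ⁻¹' Set.Iic z |
      MeasurableSpace.comap X inferInstance⟧) =ᵐ[P] fun ω => F₁ (X ω) z * e (X ω) :=
    fun z => hcond1_gen P X T Y₁ hX hT hY₁ hig₁ hcT₁ z
  have hcons₀ : ∀ ω, T ω = false → Y ω = Y₀ ω := fun ω h => by rw [hcons ω, h]; simp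
  have hcons₁ : ∀ ω, T ω = true → Y ω = Y₁ ω := fun ω h => by rw [hcons ω, h]; simp
  have hindep₀ : IndepFun (fun ω => (X ω, T ω, Y₀ ω)) Z P :=
    hindep.comp (show Measurable fun w : 𝓧 × Bool × ℝ × ℝ => (w.1, w.2.1, w.2.2.1) from
      measurable_fst.prodMk ((measurable_fst.comp measurable_snd).prodMk
        (measurable_fst.comp (measurable_snd.comp measurable_snd)))) measurable_id
  have hindep₁ : IndepFun (fun ω => (X ω, T ω, Y₁ ω)) Z P :=
    hindep.comp (show Measurable fun w : 𝓧 × Bool × ℝ × ℝ => (w.1, w.2.1, w.2.2.2) from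
      measurable_fst.prodMk ((measurable_fst.comp measurable_snd).prodMk
        (measurable_snd.comp (measurable_snd.comp measurable_snd)))) measurable_id
  have hindepV : IndepFun (fun ω => (X ω, T ω)) Z P :=
    hindep.comp (show Measurable fun w : 𝓧 × Bool × ℝ × ℝ => (w.1, w.2.1) from
      measurable_fst.prodMk (measurable_fst.comp measurable_snd)) measurable_id
  have hL₀ := groupLoss_eq P X T Y Z Y₀ hX hT hZ hY₀ false hcons₀ hindep₀ he₀m he₀01 hcT₀
    hF₀ hF₀01 hcond1₀ g₀ hg₀ hg₀01
  have hL₁ := groupLoss_eq P X T Y Z Y₁ hX hT hZ hY₁ true hcons₁ hindep₁ he he₁01 hcT₁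
    hF₁ hF₁01 hcond1₁ g₁ hg₁ hg₁01
  have hE₀ := groupEntropy_eq P X T Z hX hT hZ hindepV false he₀m he₀01 hcT₀ F₀ hF₀
  have hE₁ := groupEntropy_eq P X T Z hX hT hZ hindepV true he he₁01 hcT₁ F₁ hF₁
  set μprod := (P.map Z).prod (P.map X) with hμproddef
  have haeprod : ∀ᵐ p : ℝ × 𝓧 ∂μprod, e p.2 ∈ Set.Ioo (0:ℝ) 1 := by
    have hmap : μprod.map Prod.snd = P.map X := by
      rw [hμproddef, Measure.map_snd_prod, measure_univ, one_smul]
    exact ae_of_ae_map measurable_snd.aemeasurable (hmap ▸ he01)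
  have hae₀01 : ∀ᵐ p : ℝ × 𝓧 ∂μprod, e₀ p.2 ∈ Set.Ioo (0:ℝ) 1 :=
    haeprod.mono fun p hp => ⟨by simp only [he₀def]; linarith [hp.2], by
      simp only [he₀def]; linarith [hp.1]⟩
  have hae₁01 : ∀ᵐ p : ℝ × 𝓧 ∂μprod, e p.2 ∈ Set.Ioo (0:ℝ) 1 := haeprod
  -- pointwise a.e. inequality between integrands
  have hptle₀ : (fun p : ℝ × 𝓧 => ENNReal.ofReal (e₀ p.2 * binEntropy' (F₀ p.2 p.1)))
      ≤ᵐ[μprod] fun p => ENNReal.ofReal (e₀ p.2 * bce (F₀ p.2 p.1) (g₀ p)) := by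
    filter_upwards [hae₀01] with p hp
    exact ENNReal.ofReal_le_ofReal (mul_le_mul_of_nonneg_left
      (gibbs _ _ (hF₀01 p.2 p.1) (hg₀01 p)).1 hp.1.le)
  have hptle₁ : (fun p : ℝ × 𝓧 => ENNReal.ofReal (e p.2 * binEntropy' (F₁ p.2 p.1)))
      ≤ᵐ[μprod] fun p => ENNReal.ofReal (e p.2 * bce (F₁ p.2 p.1) (g₁ p)) := by
    filter_upwards [hae₁01] with p hp
    exact ENNReal.ofReal_le_ofReal (mul_le_mul_of_nonneg_left
      (gibbs _ _ (hF₁01 p.2 p.1) (hg₁01 p)).1 hp.1.le)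
  have hmono₀ := lintegral_mono_ae hptle₀
  have hmono₁ := lintegral_mono_ae hptle₁
  constructor
  · rw [ge_iff_le, hL₀, hL₁, hE₀, hE₁]
    exact add_le_add hmono₀ hmono₁
  · intro hfin heq
    rw [hE₀, hE₁] at hfin
    rw [hL₀, hL₁, hE₀, hE₁] at heq
    obtain ⟨hB₀fin, hB₁fin⟩ := ENNReal.add_ne_top.mp hfin
    have hA₀le : (∫⁻ p, ENNReal.ofReal (e₀ p.2 * bce (F₀ p.2 p.1) (g₀ p)) ∂μprod)
        ≤ ∫⁻ p, ENNReal.ofReal (e₀ p.2 * binEntropy' (F₀ p.2 p.1)) ∂μprod := by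
      refine (ENNReal.add_le_add_iff_right hB₁fin).mp ?_
      calc _ ≤ (∫⁻ p, ENNReal.ofReal (e₀ p.2 * bce (F₀ p.2 p.1) (g₀ p)) ∂μprod)
            + ∫⁻ p, ENNReal.ofReal (e p.2 * bce (F₁ p.2 p.1) (g₁ p)) ∂μprod :=
          add_le_add_right hmono₁ _
        _ = _ := heq
    have hA₁le : (∫⁻ p, ENNReal.ofReal (e p.2 * bce (F₁ p.2 p.1) (g₁ p)) ∂μprod)
        ≤ ∫⁻ p, ENNReal.ofReal (e p.2 * binEntropy' (F₁ p.2 p.1)) ∂μprod := by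
      refine (ENNReal.add_le_add_iff_left hB₀fin).mp ?_
      calc _ ≤ (∫⁻ p, ENNReal.ofReal (e₀ p.2 * bce (F₀ p.2 p.1) (g₀ p)) ∂μprod)
            + ∫⁻ p, ENNReal.ofReal (e p.2 * bce (F₁ p.2 p.1) (g₁ p)) ∂μprod :=
          add_le_add_left hmono₀ _
        _ = _ := heq
    have hgl₀meas : Measurable fun p : ℝ × 𝓧 =>
        ENNReal.ofReal (e₀ p.2 * bce (F₀ p.2 p.1) (g₀ p)) := by
      refine ENNReal.measurable_ofReal.comp
        (Measurable.mul (he₀m.comp measurable_snd) ?_)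
      have : (fun p : ℝ × 𝓧 => bce (F₀ p.2 p.1) (g₀ p))
          = fun p => -((F₀ p.2 p.1) * Real.log (g₀ p)
            + (1 - F₀ p.2 p.1) * Real.log (1 - g₀ p)) := by funext p; rfl
      rw [this]
      have hFp : Measurable fun p : ℝ × 𝓧 => F₀ p.2 p.1 :=
        hF₀.comp (measurable_snd.prodMk measurable_fst)
      exact ((hFp.mul (Real.measurable_log.comp hg₀)).add
        ((measurable_const.sub hFp).mul
          (Real.measurable_log.comp (measurable_const.sub hg₀)))).neg
    have hgl₁meas : Measurable fun p : ℝ × 𝓧 =>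
        ENNReal.ofReal (e p.2 * bce (F₁ p.2 p.1) (g₁ p)) := by
      refine ENNReal.measurable_ofReal.comp
        (Measurable.mul (he.comp measurable_snd) ?_)
      have : (fun p : ℝ × 𝓧 => bce (F₁ p.2 p.1) (g₁ p))
          = fun p => -((F₁ p.2 p.1) * Real.log (g₁ p)
            + (1 - F₁ p.2 p.1) * Real.log (1 - g₁ p)) := by funext p; rfl
      rw [this]
      have hFp : Measurable fun p : ℝ × 𝓧 => F₁ p.2 p.1 :=
        hF₁.comp (measurable_snd.prodMk measurable_fst)
      exact ((hFp.mul (Real.measurable_log.comp hg₁)).add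
        ((measurable_const.sub hFp).mul
          (Real.measurable_log.comp (measurable_const.sub hg₁)))).neg
    have hae₀ := ae_eq_of_ae_le_of_lintegral_le hptle₀ hB₀fin hgl₀meas.aemeasurable hA₀le
    have hae₁ := ae_eq_of_ae_le_of_lintegral_le hptle₁ hB₁fin hgl₁meas.aemeasurable hA₁le
    constructor
    · filter_upwards [hae₀, hae₀01] with p hpe hp
      have ha := hF₀01 p.2 p.1
      have hgp := hg₀01 p
      have hH := binEntropy'_nonneg ha
      have hbce := (gibbs _ _ ha hgp).1
      have hre : e₀ p.2 * binEntropy' (F₀ p.2 p.1) = e₀ p.2 * bce (F₀ p.2 p.1) (g₀ p) :=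
        (ENNReal.ofReal_eq_ofReal_iff (mul_nonneg hp.1.le hH)
          (mul_nonneg hp.1.le (hH.trans hbce))).mp hpe
      have hbe : bce (F₀ p.2 p.1) (g₀ p) = binEntropy' (F₀ p.2 p.1) :=
        (mul_left_cancel₀ (ne_of_gt hp.1) hre).symm
      exact ((gibbs _ _ ha hgp).2.mp hbe).symm
    · filter_upwards [hae₁, hae₁01] with p hpe hp
      have ha := hF₁01 p.2 p.1
      have hgp := hg₁01 p
      have hH := binEntropy'_nonneg ha
      have hbce := (gibbs _ _ ha hgp).1
      have hre : e p.2 * binEntropy' (F₁ p.2 p.1) = e p.2 * bce (F₁ p.2 p.1) (g₁ p) :=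
        (ENNReal.ofReal_eq_ofReal_iff (mul_nonneg hp.1.le hH)
          (mul_nonneg hp.1.le (hH.trans hbce))).mp hpe
      have hbe : bce (F₁ p.2 p.1) (g₁ p) = binEntropy' (F₁ p.2 p.1) :=
        (mul_left_cancel₀ (ne_of_gt hp.1) hre).symm
      exact ((gibbs _ _ ha hgp).2.mp hbe).symm
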